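/- For every point $x \in X(\phi)$, the corresponding contracting coordinate $x_c = S_{c_n}\circ\cdots\circ S_{c_1}(0)$ lies in the open interval $(-\phi^2, \phi^2)$, and $x_c$ does not depend on the choice of coding $c_1\cdots c_n \in \{-1,0,1\}^n$ with $x = \sum_{i=1}^n c_i \phi^{n-i}$. -/

import Mathlib

noncomputable def phi : ℝ := (1 + Real.sqrt 5) / 2

noncomputable def psi : ℝ := (1 - Real.sqrt 5) / 2

lemma sqrt5_sq : Real.sqrt 5 ^ 2 = 5 := Real.sq_sqrt (by norm_num)

lemma phi_pos : 0 < phi := by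
  unfold phi
  have := Real.sqrt_nonneg 5
  linarith

lemma phi_sq : phi ^ 2 = phi + 1 := by
  unfold phi; nlinarith [sqrt5_sq]

lemma psi_sq : psi ^ 2 = psi + 1 := by
  unfold psi; nlinarith [sqrt5_sq]

lemma psi_mul_phi : psi * phi = -1 := by
  unfold psi phi; nlinarith [sqrt5_sq]

lemma psi_neg : psi < 0 := by
  nlinarith [psi_mul_phi, phi_pos]

lemma step_eq (y : ℝ) (i : ℤ) : -y / phi + i = psi * y + i := by
  have hφ : phi ≠ 0 := ne_of_gt phi_pos
  have key : -y / phi = psi * y := by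
    have h1 : -y = phi * (psi * y) := by
      linear_combination (-y) * psi_mul_phi
    rw [h1, mul_div_cancel_left₀ _ hφ]
  rw [key]

lemma sqrt5_irr : Irrational (Real.sqrt 5) := by
  simpa using (by norm_num : Nat.Prime 5).irrational_sqrt

lemma int_comb (a b : ℤ) (h : (a:ℝ) + b * phi = 0) : a = 0 ∧ b = 0 := by
  by_cases hb : b = 0
  · subst hb; simp at h; exact ⟨by exact_mod_cast h, rfl⟩
  · exfalso
    apply sqrt5_irr
    refine ⟨(-(2*a+b) : ℚ)/b, ?_⟩
    have hb' : (b:ℝ) ≠ 0 := Int.cast_ne_zero.mpr hb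
    unfold phi at h
    push_cast
    field_simp
    nlinarith [h]

open Polynomial in
lemma eval_fold (r : ℝ) : ∀ (l : List ℤ) (p : ℤ[X]),
    Polynomial.aeval r (l.foldl (fun q i => X * q + C i) p)
      = List.foldl (fun (y : ℝ) (i : ℤ) => r * y + (i:ℝ)) (Polynomial.aeval r p) l := by
  intro l
  induction l with
  | nil => intro p; simp
  | cons c t ih =>
    intro p
    rw [List.foldl_cons, List.foldl_cons, ih]
    congr 1
    simp

lemma fold_coe (g : ℝ → ℝ → ℝ) (l : List ℤ) : ∀ (y : ℝ),
    List.foldl g y (do let a ← l; pure ((a : ℝ)))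
      = List.foldl (fun (y : ℝ) (i : ℤ) => g y ((i : ℤ) : ℝ)) y l := by
  induction l with
  | nil => intro y; rfl
  | cons c t ih => intro y; simp_all

open Polynomial in
lemma conj_eval (Q : ℤ[X]) (hQ : Polynomial.aeval phi Q = 0) :
    Polynomial.aeval psi Q = 0 := by
  set f : ℤ[X] := X ^ 2 - (X + 1) with hf
  have hmon : f.Monic := by
    apply Polynomial.monic_X_pow_sub
    have : (X + 1 : ℤ[X]).degree = 1 := by compute_degree!
    rw [this]; decide
  have hfφ : Polynomial.aeval phi f = 0 := by
    simp [hf]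
    rw [phi_sq]; ring
  have hfψ : Polynomial.aeval psi f = 0 := by
    simp [hf]
    rw [psi_sq]; ring
  have hdec := Polynomial.modByMonic_add_div Q f
  set r := Q %ₘ f with hr
  have hfdeg : f.degree = 2 := by
    rw [hf]; compute_degree!
  have hdeg : r.degree < 2 := hfdeg ▸ Polynomial.degree_modByMonic_lt Q hmon
  have hdeg1 : r.degree ≤ 1 := by
    rcases h : r.degree with _ | n
    · exact bot_le
    · rw [h] at hdeg
      rw [WithBot.some_eq_coe] at *
      have h2 : ((2:ℕ) : WithBot ℕ) = 2 := by norm_cast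
      have h1 : ((1:ℕ) : WithBot ℕ) = 1 := by norm_cast
      rw [← h2] at hdeg
      rw [← h1]
      exact WithBot.coe_le_coe.mpr (Nat.lt_succ_iff.mp (WithBot.coe_lt_coe.mp hdeg))
  have hrform := Polynomial.eq_X_add_C_of_degree_le_one hdeg1
  have hQφ : (r.coeff 0 : ℝ) + (r.coeff 1 : ℝ) * phi = 0 := by
    have : Polynomial.aeval phi r = 0 := by
      have := congrArg (Polynomial.aeval phi) hdec
      simp only [map_add, map_mul, hfφ, zero_mul] at this
      rw [← this] at hQ
      linarith [hQ]
    rw [hrform] at this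
    simp at this
    linarith [this]
  obtain ⟨h0, h1⟩ := int_comb _ _ hQφ
  have hrψ : Polynomial.aeval psi r = 0 := by
    rw [hrform]
    simp [h0, h1]
  have := congrArg (Polynomial.aeval psi) hdec
  simp only [map_add, map_mul, hfψ, zero_mul, hrψ, zero_add, add_zero] at this
  rw [← this]

/-- The contracting coordinate `x_c = S_{c_n} ∘ ⋯ ∘ S_{c_1}(0)` of a point
`x = T_{c_n} ∘ ⋯ ∘ T_{c_1}(0) ∈ X(φ)` lies in `(-φ², φ²)` and does not depend
on the choice of `{-1,0,1}` coding of `x`. -/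
theorem stmt_10 :
    (∀ l : List ℤ, (∀ i ∈ l, i ∈ ({-1, 0, 1} : Set ℤ)) →
      l.foldl (fun y i => -y / phi + i) 0 ∈ Set.Ioo (-(phi ^ 2)) (phi ^ 2)) ∧
    (∀ l₁ l₂ : List ℤ, (∀ i ∈ l₁, i ∈ ({-1, 0, 1} : Set ℤ)) →
      (∀ i ∈ l₂, i ∈ ({-1, 0, 1} : Set ℤ)) →
      l₁.foldl (fun y i => phi * y + i) 0 = l₂.foldl (fun y i => phi * y + i) 0 →
      l₁.foldl (fun y i => -y / phi + i) 0 = l₂.foldl (fun y i => -y / phi + i) 0) := by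
  have hstep : (fun (y : ℝ) (i : ℤ) => -y / phi + ↑i) = fun (y : ℝ) (i : ℤ) => psi * y + ↑i := by
    funext y i; exact step_eq y i
  have habs : |psi| * phi = 1 := by
    rw [abs_of_neg psi_neg]
    nlinarith [psi_mul_phi]
  have hpsi_pos : 0 < |psi| := abs_pos.mpr (ne_of_lt psi_neg)
  constructor
  · intro l hl
    simp only [fold_coe]
    simp only [step_eq]
    have key : ∀ (l : List ℤ), (∀ i ∈ l, i ∈ ({-1, 0, 1} : Set ℤ)) →
        ∀ y : ℝ, |y| < phi ^ 2 →
          |List.foldl (fun (y : ℝ) (i : ℤ) => psi * y + (i:ℝ)) y l| < phi ^ 2 := by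
      intro l
      induction l with
      | nil => intro _ y hy; simpa using hy
      | cons c t ih =>
        intro hl y hy
        simp only [List.foldl_cons]
        apply ih (fun i hi => hl i (List.mem_cons_of_mem _ hi))
        have hc : |(c:ℝ)| ≤ 1 := by
          have := hl c List.mem_cons_self
          simp only [Set.mem_insert_iff, Set.mem_singleton_iff] at this
          rcases this with h | h | h <;> simp [h]
        calc |psi * y + c| ≤ |psi * y| + |(c:ℝ)| := abs_add_le _ _
          _ ≤ |psi| * |y| + 1 := by rw [abs_mul]; linarith
          _ < |psi| * phi ^ 2 + 1 := by
              have := mul_lt_mul_of_pos_left hy hpsi_pos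
              linarith
          _ = phi + 1 := by rw [pow_two, ← mul_assoc, habs]; ring
          _ = phi ^ 2 := phi_sq.symm
    have := key l hl 0 (by simpa using pow_pos phi_pos 2)
    constructor <;> [linarith [abs_lt.mp this |>.1]; exact (abs_lt.mp this).2]
  · intro l₁ l₂ h₁ h₂ heq
    simp only [fold_coe] at heq ⊢
    simp only [step_eq]
    have e1 := eval_fold phi l₁ 0
    have e2 := eval_fold phi l₂ 0
    have p1 := eval_fold psi l₁ 0
    have p2 := eval_fold psi l₂ 0
    simp only [map_zero] at e1 e2 p1 p2
    set P₁ := l₁.foldl (fun q i => Polynomial.X * q + Polynomial.C i) 0 with hP1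
    set P₂ := l₂.foldl (fun q i => Polynomial.X * q + Polynomial.C i) 0 with hP2
    have hφeq : Polynomial.aeval phi (P₁ - P₂) = 0 := by
      rw [map_sub, e1, e2]
      rw [sub_eq_zero]
      exact heq
    have hψeq := conj_eval _ hφeq
    rw [map_sub, p1, p2, sub_eq_zero] at hψeq
    exact hψeq
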